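/- Let X be a set and f: X → X a map with f^m = id for least period m, with Z(n) = |Fix(fⁿ)| finite for all n. Define for each divisor d of m the integer P(d) = ∑_{d₁ | d} μ(d₁) Z(f^{d/d₁}). Then as formal power series, exp(∑_{n≥1} Z(n) zⁿ/n) = ∏_{d | m} (1 - z^d)^{-P(d)/d}, i.e., the m-th power of the zeta function equals ∏_{d|m} (1 - z^d)^{-m·P(d)/d}. -/

import Mathlib

private lemma iterate_fixed_gcd {X : Type*} (f : X → X) (x : X) :
    ∀ a b : ℕ, f^[a] x = x → f^[b] x = x → f^[Nat.gcd a b] x = x := by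
  intro a b
  induction a, b using Nat.gcd.induction with
  | H0 n => intro _ h; simpa using h
  | H1 a b ha ih =>
    intro h1 h2
    rw [Nat.gcd_rec]
    apply ih _ h1
    have hmul : f^[a * (b / a)] x = x := by
      rw [Function.iterate_mul]; exact Function.iterate_fixed h1 _
    calc f^[b % a] x = f^[b % a] (f^[a * (b / a)] x) := by rw [hmul]
      _ = f^[b % a + a * (b / a)] x := (Function.iterate_add_apply f _ _ x).symm
      _ = f^[b] x := by rw [Nat.mod_add_div]
      _ = x := h2

open ArithmeticFunction ArithmeticFunction.Moebius Finset in
private lemma zeta_general_product (Z : ℕ → ℤ) (m : ℕ) (hm : 1 ≤ m)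
    (hZgcd : ∀ n : ℕ, Z n = Z (Nat.gcd n m))
    (z : ℂ) (hz : ‖z‖ < 1) :
    (Complex.exp (∑' n : ℕ,
        ((Z (n + 1) : ℂ) * z ^ (n + 1)) / (n + 1))) ^ m =
      ∏ d ∈ m.divisors,
        (1 - z ^ d) ^
          (-((m / d : ℕ) : ℤ) * ∑ d₁ ∈ d.divisors, μ d₁ * Z (d / d₁)) := by
  have hm0 : m ≠ 0 := by omega
  set P : ℕ → ℤ := fun d => ∑ d₁ ∈ d.divisors, μ d₁ * Z (d / d₁) with hPdef
  set g : ℕ → ℕ → ℂ :=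
    fun e n => if e ∣ (n + 1) then (P e : ℂ) * z ^ (n + 1) / (n + 1) else 0 with hgdef
  have hinv : ∀ n > 0, ∑ e ∈ n.divisors, P e = Z n := by
    rw [ArithmeticFunction.sum_eq_iff_sum_mul_moebius_eq]
    intro n hn
    simp only [Int.cast_id]
    exact Nat.sum_divisorsAntidiagonal (fun a b => (μ a : ℤ) * Z b)
  have hZsum : ∀ n : ℕ, Z (n + 1) = ∑ e ∈ m.divisors, if e ∣ (n + 1) then P e else 0 := by
    intro n
    have h1 : (Nat.gcd (n + 1) m).divisors = m.divisors.filter (· ∣ (n + 1)) := by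
      ext e
      simp only [Nat.mem_divisors, Finset.mem_filter]
      constructor
      · rintro ⟨h, -⟩
        exact ⟨⟨h.trans (Nat.gcd_dvd_right _ _), hm0⟩, h.trans (Nat.gcd_dvd_left _ _)⟩
      · rintro ⟨⟨hh1, -⟩, hh2⟩
        exact ⟨Nat.dvd_gcd hh2 hh1, (Nat.gcd_pos_of_pos_left m n.succ_pos).ne'⟩
    rw [hZgcd (n + 1), ← hinv _ (Nat.gcd_pos_of_pos_left m n.succ_pos), h1,
      Finset.sum_filter]
  have key : ∀ e ∈ m.divisors,
      HasSum (g e) ((P e : ℂ) / e * (-Complex.log (1 - z ^ e))) := by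
    intro e he
    have he0 : 0 < e := Nat.pos_of_mem_divisors he
    have heC : (e : ℂ) ≠ 0 := Nat.cast_ne_zero.mpr he0.ne'
    have hze : ‖z ^ e‖ < 1 := by
      rw [norm_pow]
      calc ‖z‖ ^ e ≤ ‖z‖ ^ 1 := pow_le_pow_of_le_one (norm_nonneg z) hz.le he0
        _ < 1 := by simpa using hz
    have hbase := Complex.hasSum_taylorSeries_neg_log hze
    have hb1 : HasSum (fun k : ℕ => (z ^ e) ^ (k + 1) / ((k : ℂ) + 1))
        (-Complex.log (1 - z ^ e)) := by
      have h1 := (hasSum_nat_add_iff (f := fun k : ℕ => (z ^ e) ^ k / (k : ℂ)) 1).mpr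
        (by simpa using hbase)
      simp only [Nat.cast_add, Nat.cast_one] at h1
      exact h1
    have hb2 := hb1.mul_left ((P e : ℂ) / e)
    have hi : Function.Injective (fun k : ℕ => e * k + (e - 1)) := by
      intro a b hab
      simp only at hab
      exact Nat.eq_of_mul_eq_mul_left he0 (by omega)
    have hvanish : ∀ n : ℕ, n ∉ Set.range (fun k : ℕ => e * k + (e - 1)) → g e n = 0 := by
      intro n hn
      simp only [hgdef, ite_eq_right_iff]
      intro hdvd
      exfalso
      apply hn
      obtain ⟨q, hq⟩ := hdvd
      rcases q with _ | q'
      · omega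
      · refine ⟨q', ?_⟩
        simp only
        have hrw : e * (q' + 1) = e * q' + e := by ring
        rw [hrw] at hq
        omega
    have hcomp : ∀ k : ℕ, g e (e * k + (e - 1)) =
        (P e : ℂ) / e * ((z ^ e) ^ (k + 1) / ((k : ℂ) + 1)) := by
      intro k
      have h1 : e * k + (e - 1) + 1 = e * (k + 1) := by
        have : e * (k + 1) = e * k + e := by ring
        omega
      have hdvd : e ∣ (e * k + (e - 1) + 1) := h1 ▸ Dvd.intro (k + 1) rfl
      simp only [hgdef, if_pos hdvd]
      rw [div_mul_div_comm, ← pow_mul]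
      rw [show z ^ (e * k + (e - 1) + 1) = z ^ (e * (k + 1)) by rw [h1]]
      congr 1
      rw [show ((e * k + (e - 1) : ℕ) : ℂ) + 1 = ((e * k + (e - 1) + 1 : ℕ) : ℂ) by
        push_cast; ring, h1]
      push_cast
      ring
    refine (Function.Injective.hasSum_iff hi hvanish).mp ?_
    have hfun : (g e ∘ fun k : ℕ => e * k + (e - 1)) =
        fun k : ℕ => (P e : ℂ) / e * ((z ^ e) ^ (k + 1) / ((k : ℂ) + 1)) :=
      funext hcomp
    rw [hfun]
    exact hb2
  have hall : HasSum (fun n : ℕ => ((Z (n + 1) : ℂ) * z ^ (n + 1)) / ((n : ℂ) + 1))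
      (∑ e ∈ m.divisors, (P e : ℂ) / e * (-Complex.log (1 - z ^ e))) := by
    have hs := hasSum_sum (f := g) (s := m.divisors)
      (a := fun e => (P e : ℂ) / e * (-Complex.log (1 - z ^ e))) key
    convert hs using 1
    funext n
    have hc : ((Z (n + 1) : ℤ) : ℂ) = ∑ e ∈ m.divisors, if e ∣ (n + 1) then (P e : ℂ) else 0 := by
      rw [hZsum n]
      push_cast [apply_ite (Int.cast : ℤ → ℂ)]
      rfl
    rw [hc, Finset.sum_mul, Finset.sum_div]
    refine Finset.sum_congr rfl fun e he => ?_
    by_cases hd : e ∣ (n + 1) <;> simp [hgdef, hd]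
  rw [hall.tsum_eq, ← Complex.exp_nat_mul, Finset.mul_sum, Complex.exp_sum]
  refine Finset.prod_congr rfl fun e he => ?_
  have he0 : 0 < e := Nat.pos_of_mem_divisors he
  have hed : e ∣ m := (Nat.mem_divisors.mp he).1
  have heC : (e : ℂ) ≠ 0 := Nat.cast_ne_zero.mpr he0.ne'
  have hze : ‖z ^ e‖ < 1 := by
    rw [norm_pow]
    calc ‖z‖ ^ e ≤ ‖z‖ ^ 1 := pow_le_pow_of_le_one (norm_nonneg z) hz.le he0
      _ < 1 := by simpa using hz
  have hne : (1 - z ^ e) ≠ 0 := by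
    intro h
    have h1 : z ^ e = 1 := by linear_combination -h
    rw [h1] at hze
    simp at hze
  have hrhs : (1 - z ^ e) ^ (-((m / e : ℕ) : ℤ) * P e) =
      Complex.exp ((((-((m / e : ℕ) : ℤ) * P e) : ℤ) : ℂ) * Complex.log (1 - z ^ e)) := by
    rw [Complex.exp_int_mul, Complex.exp_log hne]
  rw [hrhs]
  congr 1
  have hdiv : ((m / e : ℕ) : ℂ) = (m : ℂ) / e := by
    rw [eq_div_iff heC, ← Nat.cast_mul, Nat.div_mul_cancel hed]
  simp only [Int.cast_mul, Int.cast_neg, Int.cast_natCast, hdiv]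
  ring

open ArithmeticFunction ArithmeticFunction.Moebius in
/-- Product formula for the zeta function of a periodic map: if `f^m = id` with `m`
the least period and `Z n = |Fix(fⁿ)|`, `P d = ∑_{d₁ ∣ d} μ(d₁) Z(d/d₁)`, then the
`m`-th power of `exp (∑_{n≥1} Z(n) zⁿ/n)` equals `∏_{d ∣ m} (1 - z^d)^{-(m/d)·P(d)}`. -/
theorem zeta_periodic_map_product_formula {X : Type*} (f : X → X)
    (m : ℕ) (hm : 1 ≤ m) (hid : f^[m] = _root_.id)
    (hleast : ∀ k : ℕ, 1 ≤ k → f^[k] = _root_.id → m ≤ k)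
    (hfin : ∀ n : ℕ, {x : X | f^[n] x = x}.Finite)
    (z : ℂ) (hz : ‖z‖ < 1) :
    (Complex.exp (∑' n : ℕ,
        (({x : X | f^[n + 1] x = x}.ncard : ℂ) * z ^ (n + 1)) / (n + 1))) ^ m =
      ∏ d ∈ m.divisors,
        (1 - z ^ d) ^
          (-((m / d : ℕ) : ℤ) *
            ∑ d₁ ∈ d.divisors, μ d₁ * ({x : X | f^[d / d₁] x = x}.ncard : ℤ)) := by
  have hZgcd : ∀ n : ℕ, (({x : X | f^[n] x = x}.ncard : ℤ)) =
      (({x : X | f^[Nat.gcd n m] x = x}.ncard : ℤ)) := by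
    intro n
    have hset : {x : X | f^[n] x = x} = {x : X | f^[Nat.gcd n m] x = x} := by
      ext x
      simp only [Set.mem_setOf_eq]
      constructor
      · intro hx
        exact iterate_fixed_gcd f x n m hx (by rw [hid]; rfl)
      · intro hx
        obtain ⟨k, hk⟩ := Nat.gcd_dvd_left n m
        rw [hk, Function.iterate_mul]
        exact Function.iterate_fixed hx k
    rw [hset]
  have := zeta_general_product (fun n => ({x : X | f^[n] x = x}.ncard : ℤ)) m hm hZgcd z hz
  simpa using this
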